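/- Let A ∈ T_{m,n} be a P tensor and q ∈ ℝⁿ. Then the solution set of TCP(q,A), namely {x ∈ ℝⁿ : x ≥ 0, A x^{m-1}+q ≥ 0, xᵀ(A x^{m-1}+q)=0}, is bounded. -/

import Mathlib

noncomputable def tApply {n k : ℕ} (A : Fin n → (Fin k → Fin n) → ℝ)
    (x : Fin n → ℝ) (i : Fin n) : ℝ :=
  ∑ f : Fin k → Fin n, A i f * ∏ j, x (f j)

lemma tApply_continuous {n k : ℕ} (A : Fin n → (Fin k → Fin n) → ℝ) (i : Fin n) :
    Continuous fun x => tApply A x i := by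
  unfold tApply
  exact continuous_finset_sum _ fun f _ =>
    (continuous_const.mul (continuous_finset_prod _ fun j _ => continuous_apply (f j)))

lemma tApply_smul {n k : ℕ} (A : Fin n → (Fin k → Fin n) → ℝ)
    (t : ℝ) (x : Fin n → ℝ) (i : Fin n) :
    tApply A (t • x) i = t ^ k * tApply A x i := by
  unfold tApply
  rw [Finset.mul_sum]
  refine Finset.sum_congr rfl fun f _ => ?_
  simp only [Pi.smul_apply, smul_eq_mul]
  rw [Finset.prod_mul_distrib, Finset.prod_const]
  simp [Finset.card_univ]
  ring

theorem stmt_7 {m n : ℕ} (A : Fin n → (Fin (m - 1) → Fin n) → ℝ)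
    (hP : ∀ x : Fin n → ℝ, x ≠ 0 → ∃ i, x i * tApply A x i > 0)
    (q : Fin n → ℝ) :
    Bornology.IsBounded {x : Fin n → ℝ |
      (∀ i, 0 ≤ x i) ∧ (∀ i, 0 ≤ tApply A x i + q i) ∧
        ∑ i, x i * (tApply A x i + q i) = 0} := by
  -- trivial case n = 0
  rcases Nat.eq_zero_or_pos n with hn | hn
  · subst hn
    refine Bornology.IsBounded.subset (Metric.isBounded_closedBall (x := 0) (r := 0)) ?_
    intro x _
    have : x = 0 := funext fun i => i.elim0
    simp [this]
  haveI : NeZero n := ⟨hn.ne'⟩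
  -- case k = 0 : hP is contradictory
  rcases Nat.eq_zero_or_pos (m - 1) with hk0 | hkpos
  · exfalso
    haveI : IsEmpty (Fin (m - 1)) := by rw [hk0]; infer_instance
    have hconst : ∀ x y : Fin n → ℝ, ∀ i, tApply A x i = tApply A y i := by
      intro x y i
      unfold tApply
      refine Finset.sum_congr rfl fun f _ => ?_
      rw [Finset.univ_eq_empty, Finset.prod_empty, Finset.prod_empty]
    obtain ⟨i, hi⟩ := hP (Pi.single 0 1) (by
      intro h
      have := congrFun h 0
      simp at this)
    obtain ⟨j, hj⟩ := hP (Pi.single 0 (-1)) (by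
      intro h
      have := congrFun h 0
      simp at this)
    have hi0 : i = 0 := by
      by_contra h
      rw [Pi.single_apply, if_neg h] at hi
      simp at hi
    have hj0 : j = 0 := by
      by_contra h
      rw [Pi.single_apply, if_neg h] at hj
      simp at hj
    subst hi0; subst hj0
    rw [Pi.single_apply, if_pos rfl] at hi hj
    rw [hconst (Pi.single 0 (-1)) (Pi.single 0 1) 0] at hj
    nlinarith
  -- main case
  -- the "P-gap" function
  set g : (Fin n → ℝ) → ℝ := fun y => ∑ i, max (y i * tApply A y i) 0 with hg
  have hg_cont : Continuous g := by
    exact continuous_finset_sum _ fun i _ =>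
      ((continuous_apply i).mul (tApply_continuous A i)).max continuous_const
  have hg_nonneg : ∀ y, 0 ≤ g y := fun y =>
    Finset.sum_nonneg fun i _ => le_max_right _ _
  have hg_pos : ∀ y : Fin n → ℝ, y ≠ 0 → 0 < g y := by
    intro y hy
    obtain ⟨i, hi⟩ := hP y hy
    refine Finset.sum_pos' (fun j _ => le_max_right _ _) ⟨i, Finset.mem_univ i, ?_⟩
    exact lt_max_of_lt_left hi
  -- compactness of the sphere
  have hcs : IsCompact (Metric.sphere (0 : Fin n → ℝ) 1) := isCompact_sphere 0 1
  have hne : (Metric.sphere (0 : Fin n → ℝ) 1).Nonempty := by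
    haveI : Nontrivial (Fin n → ℝ) := Pi.nontrivial
    exact NormedSpace.sphere_nonempty.2 zero_le_one
  obtain ⟨y₀, hy₀mem, hmin⟩ := hcs.exists_isMinOn hne hg_cont.continuousOn
  have hy₀ne : y₀ ≠ 0 := by
    intro h
    rw [h, mem_sphere_zero_iff_norm] at hy₀mem
    simp at hy₀mem
  set δ : ℝ := g y₀ with hδ
  have hδpos : 0 < δ := hg_pos y₀ hy₀ne
  -- the bound
  rw [isBounded_iff_forall_norm_le]
  refine ⟨1 + n * ‖q‖ / δ, ?_⟩
  rintro x ⟨hx1, hx2, hx3⟩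
  by_contra hbig
  push_neg at hbig
  set t : ℝ := ‖x‖ with ht
  have hq0 : 0 ≤ n * ‖q‖ / δ := by positivity
  have ht1 : (1 : ℝ) < t := by linarith
  have htpos : (0 : ℝ) < t := by linarith
  have hxne : x ≠ 0 := by
    intro h
    rw [h] at ht
    simp at ht
    linarith
  set y : Fin n → ℝ := t⁻¹ • x with hy
  have hxy : x = t • y := by
    rw [hy, smul_smul, mul_inv_cancel₀ htpos.ne', one_smul]
  have hymem : y ∈ Metric.sphere (0 : Fin n → ℝ) 1 := by
    rw [mem_sphere_zero_iff_norm, hy, norm_smul, norm_inv, Real.norm_eq_abs,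
      abs_of_pos htpos, ← ht, inv_mul_cancel₀ htpos.ne']
  -- componentwise complementarity
  have hcomp : ∀ i, x i * (tApply A x i + q i) = 0 := by
    have := (Finset.sum_eq_zero_iff_of_nonneg
      (fun i _ => mul_nonneg (hx1 i) (hx2 i))).1 hx3
    intro i; exact this i (Finset.mem_univ i)
  -- g x ≤ n * t * ‖q‖
  have hgx_le : g x ≤ n * t * ‖q‖ := by
    have hterm : ∀ i, max (x i * tApply A x i) 0 ≤ t * ‖q‖ := by
      intro i
      have h1 : x i * tApply A x i = -(x i * q i) := by
        have := hcomp i; nlinarith [hcomp i]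
      have h2 : |x i| ≤ t := by rw [← Real.norm_eq_abs, ht]; exact norm_le_pi_norm x i
      have h3 : |q i| ≤ ‖q‖ := by rw [← Real.norm_eq_abs]; exact norm_le_pi_norm q i
      have h4 : |x i * q i| ≤ t * ‖q‖ := by
        rw [abs_mul]
        exact mul_le_mul h2 h3 (abs_nonneg _) htpos.le
      have h5 : x i * tApply A x i ≤ t * ‖q‖ := by
        rw [h1]
        calc -(x i * q i) ≤ |x i * q i| := neg_le_abs _
          _ ≤ t * ‖q‖ := h4
      exact max_le h5 (by positivity)
    calc g x ≤ ∑ _i : Fin n, t * ‖q‖ := Finset.sum_le_sum fun i _ => hterm i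
      _ = n * t * ‖q‖ := by rw [Finset.sum_const, Finset.card_univ, Fintype.card_fin]; ring
  -- g x = t^(k+1) * g y
  have hgx_eq : g x = t ^ (m - 1 + 1) * g y := by
    rw [hg, Finset.mul_sum]
    refine Finset.sum_congr rfl fun i _ => ?_
    have : x i * tApply A x i = t ^ (m - 1 + 1) * (y i * tApply A y i) := by
      rw [hxy, tApply_smul, Pi.smul_apply, smul_eq_mul]
      ring
    rw [this, mul_max_of_nonneg _ _ (by positivity : (0:ℝ) ≤ t ^ (m - 1 + 1)), mul_zero]
  have hgy : δ ≤ g y := hmin hymem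
  -- combine
  have hchain : t ^ (m - 1 + 1) * δ ≤ n * t * ‖q‖ := by
    calc t ^ (m - 1 + 1) * δ ≤ t ^ (m - 1 + 1) * g y := by
          exact mul_le_mul_of_nonneg_left hgy (by positivity)
      _ = g x := hgx_eq.symm
      _ ≤ n * t * ‖q‖ := hgx_le
  have htk : t ≤ t ^ (m - 1) := le_self_pow₀ ht1.le hkpos.ne'
  have : t * t * δ ≤ n * t * ‖q‖ := by
    calc t * t * δ ≤ t ^ (m - 1) * t * δ := by nlinarith [mul_nonneg (mul_nonneg (sub_nonneg.2 htk) htpos.le) hδpos.le]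
      _ = t ^ (m - 1 + 1) * δ := by rw [pow_succ]
      _ ≤ n * t * ‖q‖ := hchain
  have hfinal : t * δ ≤ n * ‖q‖ := by
    have := (mul_le_mul_iff_of_pos_right htpos).1 (by nlinarith : t * δ * t ≤ n * ‖q‖ * t)
    exact this
  have : t ≤ n * ‖q‖ / δ := (le_div_iff₀ hδpos).2 hfinal
  linarith
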